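/- Let G be a group such that [u, vⁿ] = u v^n u⁻¹ v⁻ⁿ lies in the center Z(G) for all u, v ∈ G. Define a ∘ b = b a b⁻¹ and a ⋆ b = b^(n+1) a b^(-(n+1)). Then for all x, a, b ∈ G, x ∘ (a ∘ b) = x ∘ (a ⋆ b), i.e., conjugation by a ∘ b equals conjugation by a ⋆ b. -/
import Mathlib


/-- If every commutator `[u, vⁿ] = u * vⁿ * u⁻¹ * v⁻ⁿ` is central, then with
`a ∘ b = b * a * b⁻¹` and `a ⋆ b = b^(n+1) * a * b^(-(n+1))`, conjugation by
`a ∘ b` equals conjugation by `a ⋆ b`: `x ∘ (a ∘ b) = x ∘ (a ⋆ b)`. -/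
theorem strange_relation_conj {G : Type*} [Group G] (n : ℕ)
    (h : ∀ u v : G, u * v ^ n * u⁻¹ * (v ^ n)⁻¹ ∈ Subgroup.center G)
    (x a b : G) :
    (b * a * b⁻¹) * x * (b * a * b⁻¹)⁻¹ =
      (b ^ (n + 1) * a * (b ^ (n + 1))⁻¹) * x * (b ^ (n + 1) * a * (b ^ (n + 1))⁻¹)⁻¹ := by
  set z : G := a * b ^ n * a⁻¹ * (b ^ n)⁻¹ with hzdef
  have hz : ∀ g : G, g * z = z * g := Subgroup.mem_center_iff.mp (h a b)
  have hbz : b * z⁻¹ = z⁻¹ * b := by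
    have := hz b
    calc b * z⁻¹ = z⁻¹ * (z * b) * z⁻¹ := by group
      _ = z⁻¹ * (b * z) * z⁻¹ := by rw [← this]
      _ = z⁻¹ * b := by group
  have h1 : b ^ (n + 1) * a * (b ^ (n + 1))⁻¹ = z⁻¹ * (b * a * b⁻¹) := by
    have ha : z⁻¹ * a = b ^ n * a * (b ^ n)⁻¹ := by rw [hzdef]; group
    calc b ^ (n + 1) * a * (b ^ (n + 1))⁻¹
        = b * (b ^ n * a * (b ^ n)⁻¹) * b⁻¹ := by rw [pow_succ']; group
      _ = b * (z⁻¹ * a) * b⁻¹ := by rw [ha]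
      _ = b * z⁻¹ * (a * b⁻¹) := by group
      _ = z⁻¹ * b * (a * b⁻¹) := by rw [hbz]
      _ = z⁻¹ * (b * a * b⁻¹) := by group
  rw [h1]
  have := hz (b * a * b⁻¹ * x * (b * a * b⁻¹)⁻¹)
  calc (b * a * b⁻¹) * x * (b * a * b⁻¹)⁻¹
      = z⁻¹ * (z * ((b * a * b⁻¹) * x * (b * a * b⁻¹)⁻¹)) := by group
    _ = z⁻¹ * ((b * a * b⁻¹) * x * (b * a * b⁻¹)⁻¹ * z) := by rw [← this]
    _ = z⁻¹ * (b * a * b⁻¹) * x * (z⁻¹ * (b * a * b⁻¹))⁻¹ := by group
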